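/- Let K ≥ 2 and consider a tournament on K arms. For each arm i with in-degree deg⁻(i) ≥ 1, we have ∑_{i : deg⁻(i) ≥ 1} (K−1)/deg⁻(i) ≤ 5(K−1)·(⌈log₂(K−1)⌉ + 1), where deg⁻(i) is the number of arms beating arm i. -/

import Mathlib

open Finset

lemma tournament_count (K : ℕ) (r : Fin K → Fin K → Prop) [DecidableRel r]
    (hirr : ∀ v, ¬ r v v)
    (htour : ∀ u v : Fin K, u ≠ v → (r u v ↔ ¬ r v u)) (d0 : ℕ) :
    (univ.filter fun i : Fin K => (univ.filter fun j => r j i).card ≤ d0).card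
      ≤ 2 * d0 + 1 := by
  set S := univ.filter fun i : Fin K => (univ.filter fun j => r j i).card ≤ d0 with hS
  have hsplit : ∀ i ∈ S, (S.filter fun j => r j i).card + (S.filter fun j => r i j).card
      = S.card - 1 := by
    intro i hi
    have hdisj : Disjoint (S.filter fun j => r j i) (S.filter fun j => r i j) := by
      rw [Finset.disjoint_left]
      intro j hj1 hj2
      simp only [mem_filter] at hj1 hj2
      have hne : j ≠ i := fun h => hirr i (h ▸ hj1.2)
      exact ((htour j i hne).mp hj1.2) hj2.2
    have hunion : (S.filter fun j => r j i) ∪ (S.filter fun j => r i j) = S.erase i := by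
      rw [← Finset.filter_or]
      ext j
      simp only [mem_filter, mem_erase]
      constructor
      · rintro ⟨hj, h | h⟩
        · exact ⟨fun he => hirr i (he ▸ h), hj⟩
        · exact ⟨fun he => hirr i (he ▸ h), hj⟩
      · rintro ⟨hne, hj⟩
        refine ⟨hj, ?_⟩
        by_cases h : r j i
        · exact Or.inl h
        · exact Or.inr ((htour i j (Ne.symm hne)).mpr h)
    have := Finset.card_union_of_disjoint hdisj
    rw [hunion, Finset.card_erase_of_mem hi] at this
    omega
  have hdouble : ∑ i ∈ S, (S.filter fun j => r j i).card
      = ∑ i ∈ S, (S.filter fun j => r i j).card := by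
    simp_rw [Finset.card_filter]
    rw [Finset.sum_comm]
  have hsum : ∑ i ∈ S, ((S.filter fun j => r j i).card + (S.filter fun j => r i j).card)
      = S.card * (S.card - 1) := by
    rw [Finset.sum_congr rfl hsplit, Finset.sum_const, smul_eq_mul]
  have hbound : ∀ i ∈ S, (S.filter fun j => r j i).card ≤ d0 := by
    intro i hi
    rw [hS, mem_filter] at hi
    exact le_trans (Finset.card_le_card (Finset.filter_subset_filter _ (Finset.subset_univ S))) hi.2
  have h1 : S.card * (S.card - 1) ≤ 2 * (S.card * d0) := by
    rw [← hsum, Finset.sum_add_distrib, ← hdouble, ← two_mul]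
    have : ∑ i ∈ S, (S.filter fun j => r j i).card ≤ S.card * d0 := by
      calc ∑ i ∈ S, (S.filter fun j => r j i).card ≤ ∑ _i ∈ S, d0 := Finset.sum_le_sum hbound
        _ = S.card * d0 := by rw [Finset.sum_const, smul_eq_mul]
    omega
  rcases Nat.eq_zero_or_pos S.card with h | h
  · omega
  · have h2 : S.card * (S.card - 1) ≤ S.card * (2 * d0) := by
      have : S.card * (2 * d0) = 2 * (S.card * d0) := by ring
      omega
    have h3 := Nat.le_of_mul_le_mul_left h2 h
    omega

/-- In a tournament on `K ≥ 2` arms, summing `(K-1)/deg⁻(i)` over arms `i` with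
in-degree at least `1` gives at most `5(K-1)(⌈log₂(K-1)⌉ + 1)`. -/
theorem sum_inv_indeg_le (K : ℕ) (hK : 2 ≤ K)
    (r : Fin K → Fin K → Prop) [DecidableRel r]
    (hirr : ∀ v, ¬ r v v)
    (htour : ∀ u v : Fin K, u ≠ v → (r u v ↔ ¬ r v u)) :
    ∑ i ∈ Finset.univ.filter
        (fun i : Fin K => 1 ≤ (Finset.univ.filter (fun j => r j i)).card),
      ((K : ℝ) - 1) / ((Finset.univ.filter (fun j => r j i)).card : ℝ)
      ≤ 5 * ((K : ℝ) - 1) * ((Nat.clog 2 (K - 1) : ℝ) + 1) := by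
  set d : Fin K → ℕ := fun i => (univ.filter fun j => r j i).card with hd
  set A : Finset (Fin K) := univ.filter fun i : Fin K => 1 ≤ d i with hA
  set L : ℕ := Nat.log 2 (K - 1) with hL
  have hdK : ∀ i, d i ≤ K - 1 := by
    intro i
    have hsub : (univ.filter fun j => r j i) ⊆ univ.erase i := by
      intro j hj
      rw [mem_filter] at hj
      exact mem_erase.mpr ⟨fun h => hirr i (h ▸ hj.2), mem_univ j⟩
    calc d i ≤ (univ.erase i).card := Finset.card_le_card hsub
      _ = K - 1 := by rw [Finset.card_erase_of_mem (mem_univ i), Finset.card_univ, Fintype.card_fin]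
  have hmaps : ∀ i ∈ A, Nat.log 2 (d i) ∈ Finset.range (L + 1) := by
    intro i _
    rw [Finset.mem_range, Nat.lt_succ_iff, hL]
    exact Nat.log_mono_right (hdK i)
  rw [← Finset.sum_fiberwise_of_maps_to hmaps]
  have hinner : ∀ t ∈ Finset.range (L + 1),
      ∑ i ∈ A.filter (fun i => Nat.log 2 (d i) = t), ((K : ℝ) - 1) / (d i : ℝ)
      ≤ 4 * ((K : ℝ) - 1) := by
    intro t _
    have hcard : (A.filter (fun i => Nat.log 2 (d i) = t)).card ≤ 4 * 2 ^ t := by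
      have hsub : A.filter (fun i => Nat.log 2 (d i) = t)
          ⊆ univ.filter fun i : Fin K => (univ.filter fun j => r j i).card ≤ 2 ^ (t + 1) - 1 := by
        intro i hi
        simp only [mem_filter, hA, mem_univ, true_and] at hi ⊢
        have h1 : d i < 2 ^ (Nat.log 2 (d i) + 1) := Nat.lt_pow_succ_log_self (by norm_num) _
        rw [hi.2] at h1
        have : d i ≤ 2 ^ (t + 1) - 1 := by omega
        exact this
      have := le_trans (Finset.card_le_card hsub)
        (tournament_count K r hirr htour (2 ^ (t + 1) - 1))
      have h2t : 1 ≤ 2 ^ t := Nat.one_le_two_pow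
      have he : 2 ^ (t + 1) = 2 * 2 ^ t := by rw [pow_succ]; ring
      omega
    have hterm : ∀ i ∈ A.filter (fun i => Nat.log 2 (d i) = t),
        ((K : ℝ) - 1) / (d i : ℝ) ≤ ((K : ℝ) - 1) / (2 ^ t : ℝ) := by
      intro i hi
      simp only [mem_filter, hA, mem_univ, true_and] at hi
      have hdi : 2 ^ t ≤ d i := by
        rw [← hi.2]
        exact Nat.pow_log_le_self 2 (by omega)
      have hKr : (0:ℝ) ≤ (K : ℝ) - 1 := by
        have : (2:ℝ) ≤ (K:ℝ) := by exact_mod_cast hK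
        linarith
      have h2r : (0:ℝ) < (2:ℝ) ^ t := by positivity
      have hdir : ((2:ℝ)) ^ t ≤ (d i : ℝ) := by exact_mod_cast hdi
      gcongr
    calc ∑ i ∈ A.filter (fun i => Nat.log 2 (d i) = t), ((K : ℝ) - 1) / (d i : ℝ)
        ≤ ∑ _i ∈ A.filter (fun i => Nat.log 2 (d i) = t), ((K : ℝ) - 1) / (2 ^ t : ℝ) :=
          Finset.sum_le_sum hterm
      _ = ((A.filter (fun i => Nat.log 2 (d i) = t)).card : ℝ) * (((K : ℝ) - 1) / (2 ^ t : ℝ)) := by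
          rw [Finset.sum_const, nsmul_eq_mul]
      _ ≤ (4 * 2 ^ t : ℝ) * (((K : ℝ) - 1) / (2 ^ t : ℝ)) := by
          have hKr : (0:ℝ) ≤ ((K : ℝ) - 1) / (2 ^ t : ℝ) := by
            have h2 : (2:ℝ) ≤ (K:ℝ) := by exact_mod_cast hK
            apply div_nonneg (by linarith) (by positivity)
          have : ((A.filter (fun i => Nat.log 2 (d i) = t)).card : ℝ) ≤ (4 * 2 ^ t : ℝ) := by
            exact_mod_cast hcard
          exact mul_le_mul_of_nonneg_right this hKr
      _ = 4 * ((K : ℝ) - 1) := by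
          field_simp
  calc ∑ t ∈ Finset.range (L + 1),
        ∑ i ∈ A.filter (fun i => Nat.log 2 (d i) = t), ((K : ℝ) - 1) / (d i : ℝ)
      ≤ ∑ _t ∈ Finset.range (L + 1), 4 * ((K : ℝ) - 1) := Finset.sum_le_sum hinner
    _ = ((L : ℝ) + 1) * (4 * ((K : ℝ) - 1)) := by
        rw [Finset.sum_const, Finset.card_range, nsmul_eq_mul]; push_cast; ring
    _ ≤ 5 * ((K : ℝ) - 1) * ((Nat.clog 2 (K - 1) : ℝ) + 1) := by
        have hlc : L ≤ Nat.clog 2 (K - 1) := Nat.log_le_clog 2 (K - 1)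
        have hlc' : (L : ℝ) ≤ (Nat.clog 2 (K - 1) : ℝ) := by exact_mod_cast hlc
        have hKr : (0:ℝ) ≤ (K : ℝ) - 1 := by
          have : (2:ℝ) ≤ (K:ℝ) := by exact_mod_cast hK
          linarith
        nlinarith [hlc', hKr]
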